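/- Let d₁ ≥ 1, d₂ ≥ 2, m ∈ ℕ, and write Fourier variables (ξ, η') ∈ ℝ^{d₁} × ℝ^{d₂-1}. Set ω(ξ,η') = √(|ξ|² − |η'|²) on R₁ = {|η'| < |ξ|} and λ(ξ,η') = √(|η'|² − |ξ|²) on R₂ = {|ξ| < |η'|}, and let W_m(ξ,η') = (1 + |ξ|² + |η'|²)^m. Let a, b : ℝ^{d₁} × ℝ^{d₂-1} → ℂ be measurable with λ·a + b = 0 almost everywhere on R₂. For y₁ ≥ 0 define A(y₁) = cos(ω y₁)·a + (sin(ω y₁)/ω)·b, B(y₁) = −ω·sin(ω y₁)·a + cos(ω y₁)·b on R₁, and A(y₁) = cosh(λ y₁)·a + (sinh(λ y₁)/λ)·b, B(y₁) = λ·sinh(λ y₁)·a + cosh(λ y₁)·b on R₂. Then for every y₁ ≥ 0, ∬_{R₁} W_m·ω²|A(y₁)|² + ∬_{R₂} W_m·λ²|A(y₁)|² + ∬_{R₁∪R₂} W_m·|B(y₁)|² ≤ ∬_{R₁} W_m·ω²|a|² + ∬_{R₂} W_m·λ²|a|² + ∬_{R₁∪R₂} W_m·|b|². -/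

import Mathlib

open MeasureTheory

/-- Trigonometric energy identity in the hyperbolic region. -/
lemma propagator_key1 (w y : ℝ) (hw : w ≠ 0) (z u : ℂ) :
    w ^ 2 * ‖(Real.cos (w * y) : ℂ) * z + ((Real.sin (w * y) / w : ℝ) : ℂ) * u‖ ^ 2
      + ‖-((w * Real.sin (w * y) : ℝ) : ℂ) * z + ((Real.cos (w * y) : ℝ) : ℂ) * u‖ ^ 2
    = w ^ 2 * ‖z‖ ^ 2 + ‖u‖ ^ 2 := by
  have h := Real.sin_sq_add_cos_sq (w * y)
  set c := Real.cos (w * y)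
  set s := Real.sin (w * y)
  simp only [Complex.sq_norm, Complex.normSq_apply, Complex.add_re, Complex.add_im,
    Complex.mul_re, Complex.mul_im, Complex.neg_re, Complex.neg_im,
    Complex.ofReal_re, Complex.ofReal_im]
  field_simp
  linear_combination (w ^ 2 * z.re ^ 2 + w ^ 2 * z.im ^ 2 + u.re ^ 2 + u.im ^ 2) * h

/-- Hyperbolic-functions energy inequality in the elliptic (stable) region. -/
lemma propagator_key2 (l y : ℝ) (hl : 0 < l) (hy : 0 ≤ y) (z : ℂ) :
    l ^ 2 * ‖(Real.cosh (l * y) : ℂ) * z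
        + ((Real.sinh (l * y) / l : ℝ) : ℂ) * (-(l : ℂ) * z)‖ ^ 2
      + ‖((l * Real.sinh (l * y) : ℝ) : ℂ) * z
        + ((Real.cosh (l * y) : ℝ) : ℂ) * (-(l : ℂ) * z)‖ ^ 2
    ≤ l ^ 2 * ‖z‖ ^ 2 + ‖-(l : ℂ) * z‖ ^ 2 := by
  have hl' : (l : ℂ) ≠ 0 := by exact_mod_cast hl.ne'
  have hE1 : Real.exp (-(l * y)) ≤ 1 := Real.exp_le_one_iff.mpr (by nlinarith)
  have hE0 : 0 ≤ Real.exp (-(l * y)) := (Real.exp_pos _).le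
  have e1 : (Real.cosh (l * y) : ℂ) * z + ((Real.sinh (l * y) / l : ℝ) : ℂ) * (-(l : ℂ) * z)
      = ((Real.exp (-(l * y)) : ℝ) : ℂ) * z := by
    push_cast
    have hC := Complex.cosh_sub_sinh ((l : ℂ) * y)
    field_simp
    linear_combination z * hC
  have e2 : ((l * Real.sinh (l * y) : ℝ) : ℂ) * z + ((Real.cosh (l * y) : ℝ) : ℂ) * (-(l : ℂ) * z)
      = -(l : ℂ) * (((Real.exp (-(l * y)) : ℝ) : ℂ) * z) := by
    push_cast
    have hC := Complex.cosh_sub_sinh ((l : ℂ) * y)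
    linear_combination (-(l : ℂ) * z) * hC
  rw [e1, e2]
  simp only [norm_mul, norm_neg, Complex.norm_real, Real.norm_eq_abs, mul_pow]
  have habs : |Real.exp (-(l * y))| = Real.exp (-(l * y)) := abs_of_nonneg hE0
  rw [habs, sq_abs]
  have hE2 : Real.exp (-(l * y)) ^ 2 ≤ 1 := by nlinarith
  nlinarith [mul_nonneg (sq_nonneg l) (sq_nonneg (‖z‖)), hE2]

/-- The frequency space used in the propagator estimate. -/
abbrev PropagatorFreqSpace (d₁ d₂ : ℕ) :=
  EuclideanSpace ℝ (Fin d₁) × EuclideanSpace ℝ (Fin (d₂ - 1))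

/-- Higher-energy-space version (Corollary to Theorems 2 and 3 of the paper) of the
propagator estimate: with the polynomial weight `W_m = (1+|ξ|²+|η'|²)^m`, the
weighted energy norm does not increase for `y₁ ≥ 0` on the subspace `X^{m,S}`. -/
theorem propagator_higher_energy_bound_stable
    (d₁ d₂ : ℕ) (hd₁ : 1 ≤ d₁) (hd₂ : 2 ≤ d₂) (m : ℕ)
    (a b : EuclideanSpace ℝ (Fin d₁) × EuclideanSpace ℝ (Fin (d₂ - 1)) → ℂ)
    (ha : Measurable a) (hb : Measurable b)
    (ω lam W : EuclideanSpace ℝ (Fin d₁) × EuclideanSpace ℝ (Fin (d₂ - 1)) → ℝ)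
    (hω : ∀ p, ω p = Real.sqrt (‖p.1‖ ^ 2 - ‖p.2‖ ^ 2))
    (hlam : ∀ p, lam p = Real.sqrt (‖p.2‖ ^ 2 - ‖p.1‖ ^ 2))
    (hW : ∀ p, W p = (1 + ‖p.1‖ ^ 2 + ‖p.2‖ ^ 2) ^ m)
    (hconstraint : ∀ᵐ p ∂(volume.restrict
        {p : EuclideanSpace ℝ (Fin d₁) × EuclideanSpace ℝ (Fin (d₂ - 1)) | ‖p.1‖ < ‖p.2‖}),
      (lam p : ℂ) * a p + b p = 0)
    (A B : ℝ → (EuclideanSpace ℝ (Fin d₁) × EuclideanSpace ℝ (Fin (d₂ - 1))) → ℂ)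
    (hA₁ : ∀ y₁ p, ‖p.2‖ < ‖p.1‖ →
      A y₁ p = (Real.cos (ω p * y₁) : ℂ) * a p
        + ((Real.sin (ω p * y₁) / ω p : ℝ) : ℂ) * b p)
    (hB₁ : ∀ y₁ p, ‖p.2‖ < ‖p.1‖ →
      B y₁ p = -((ω p * Real.sin (ω p * y₁) : ℝ) : ℂ) * a p
        + ((Real.cos (ω p * y₁) : ℝ) : ℂ) * b p)
    (hA₂ : ∀ y₁ p, ‖p.1‖ < ‖p.2‖ →
      A y₁ p = (Real.cosh (lam p * y₁) : ℂ) * a p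
        + ((Real.sinh (lam p * y₁) / lam p : ℝ) : ℂ) * b p)
    (hB₂ : ∀ y₁ p, ‖p.1‖ < ‖p.2‖ →
      B y₁ p = ((lam p * Real.sinh (lam p * y₁) : ℝ) : ℂ) * a p
        + ((Real.cosh (lam p * y₁) : ℝ) : ℂ) * b p) :
    ∀ y₁ : ℝ, 0 ≤ y₁ →
      (∫⁻ p in {p : EuclideanSpace ℝ (Fin d₁) × EuclideanSpace ℝ (Fin (d₂ - 1)) |
            ‖p.2‖ < ‖p.1‖},
          ENNReal.ofReal (W p * (ω p ^ 2 * ‖A y₁ p‖ ^ 2)))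
        + (∫⁻ p in {p : EuclideanSpace ℝ (Fin d₁) × EuclideanSpace ℝ (Fin (d₂ - 1)) |
            ‖p.1‖ < ‖p.2‖},
          ENNReal.ofReal (W p * (lam p ^ 2 * ‖A y₁ p‖ ^ 2)))
        + (∫⁻ p in {p : EuclideanSpace ℝ (Fin d₁) × EuclideanSpace ℝ (Fin (d₂ - 1)) |
            ‖p.2‖ < ‖p.1‖} ∪ {p | ‖p.1‖ < ‖p.2‖},
          ENNReal.ofReal (W p * ‖B y₁ p‖ ^ 2))
      ≤ (∫⁻ p in {p : EuclideanSpace ℝ (Fin d₁) × EuclideanSpace ℝ (Fin (d₂ - 1)) |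
            ‖p.2‖ < ‖p.1‖},
          ENNReal.ofReal (W p * (ω p ^ 2 * ‖a p‖ ^ 2)))
        + (∫⁻ p in {p : EuclideanSpace ℝ (Fin d₁) × EuclideanSpace ℝ (Fin (d₂ - 1)) |
            ‖p.1‖ < ‖p.2‖},
          ENNReal.ofReal (W p * (lam p ^ 2 * ‖a p‖ ^ 2)))
        + (∫⁻ p in {p : EuclideanSpace ℝ (Fin d₁) × EuclideanSpace ℝ (Fin (d₂ - 1)) |
            ‖p.2‖ < ‖p.1‖} ∪ {p | ‖p.1‖ < ‖p.2‖},
          ENNReal.ofReal (W p * ‖b p‖ ^ 2)) := by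
  intro y₁ hy₁
  set S₁ : Set (PropagatorFreqSpace d₁ d₂) := {p | ‖p.2‖ < ‖p.1‖} with hS₁def
  set S₂ : Set (PropagatorFreqSpace d₁ d₂) := {p | ‖p.1‖ < ‖p.2‖} with hS₂def
  have hn1 : Measurable fun p : PropagatorFreqSpace d₁ d₂ => ‖p.1‖ := measurable_fst.norm
  have hn2 : Measurable fun p : PropagatorFreqSpace d₁ d₂ => ‖p.2‖ := measurable_snd.norm
  have hS₁ : MeasurableSet S₁ := measurableSet_lt hn2 hn1
  have hS₂ : MeasurableSet S₂ := measurableSet_lt hn1 hn2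
  have hdisj : Disjoint S₁ S₂ := by
    rw [Set.disjoint_left]
    intro p h1 h2
    have h1' : ‖p.2‖ < ‖p.1‖ := h1
    have h2' : ‖p.1‖ < ‖p.2‖ := h2
    exact lt_asymm h1' h2'
  have hωm : Measurable ω := by
    have : ω = fun p : PropagatorFreqSpace d₁ d₂ => Real.sqrt (‖p.1‖ ^ 2 - ‖p.2‖ ^ 2) := funext hω
    rw [this]
    exact Real.continuous_sqrt.measurable.comp ((hn1.pow_const 2).sub (hn2.pow_const 2))
  have hlm : Measurable lam := by
    have : lam = fun p : PropagatorFreqSpace d₁ d₂ => Real.sqrt (‖p.2‖ ^ 2 - ‖p.1‖ ^ 2) := funext hlam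
    rw [this]
    exact Real.continuous_sqrt.measurable.comp ((hn2.pow_const 2).sub (hn1.pow_const 2))
  have hWm : Measurable W := by
    have : W = fun p : PropagatorFreqSpace d₁ d₂ => (1 + ‖p.1‖ ^ 2 + ‖p.2‖ ^ 2) ^ m := funext hW
    rw [this]
    exact (((measurable_const.add (hn1.pow_const 2)).add (hn2.pow_const 2)).pow_const m)
  have hW0 : ∀ p : PropagatorFreqSpace d₁ d₂, 0 ≤ W p := by
    intro p
    rw [hW]
    positivity
  have hωpos : ∀ p ∈ S₁, 0 < ω p := by
    intro p hp
    rw [hω]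
    refine Real.sqrt_pos.mpr ?_
    have h2 : ‖p.2‖ < ‖p.1‖ := hp
    nlinarith [norm_nonneg p.1, norm_nonneg p.2]
  have hlpos : ∀ p ∈ S₂, 0 < lam p := by
    intro p hp
    rw [hlam]
    refine Real.sqrt_pos.mpr ?_
    have h2 : ‖p.1‖ < ‖p.2‖ := hp
    nlinarith [norm_nonneg p.1, norm_nonneg p.2]
  -- measurability of auxiliary complex functions
  have habs : ∀ {f : PropagatorFreqSpace d₁ d₂ → ℂ}, Measurable f → Measurable fun p => ‖f p‖ :=
    fun hf => continuous_norm.measurable.comp hf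
  have hcos : Measurable fun p : PropagatorFreqSpace d₁ d₂ => Real.cos (ω p * y₁) :=
    Real.continuous_cos.measurable.comp (hωm.mul_const y₁)
  have hsin : Measurable fun p : PropagatorFreqSpace d₁ d₂ => Real.sin (ω p * y₁) :=
    Real.continuous_sin.measurable.comp (hωm.mul_const y₁)
  have hcosh : Measurable fun p : PropagatorFreqSpace d₁ d₂ => Real.cosh (lam p * y₁) :=
    Real.continuous_cosh.measurable.comp (hlm.mul_const y₁)
  have hsinh : Measurable fun p : PropagatorFreqSpace d₁ d₂ => Real.sinh (lam p * y₁) :=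
    Real.continuous_sinh.measurable.comp (hlm.mul_const y₁)
  have hof : ∀ {f : PropagatorFreqSpace d₁ d₂ → ℝ}, Measurable f → Measurable fun p => (f p : ℂ) :=
    fun hf => Complex.measurable_ofReal.comp hf
  have hfa1 : Measurable fun p : PropagatorFreqSpace d₁ d₂ => (Real.cos (ω p * y₁) : ℂ) * a p
      + ((Real.sin (ω p * y₁) / ω p : ℝ) : ℂ) * b p :=
    ((hof hcos).mul ha).add ((hof (hsin.div hωm)).mul hb)
  have hfb1 : Measurable fun p : PropagatorFreqSpace d₁ d₂ => -((ω p * Real.sin (ω p * y₁) : ℝ) : ℂ) * a p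
      + ((Real.cos (ω p * y₁) : ℝ) : ℂ) * b p :=
    (((hof (hωm.mul hsin)).neg).mul ha).add ((hof hcos).mul hb)
  have hfa2 : Measurable fun p : PropagatorFreqSpace d₁ d₂ => (Real.cosh (lam p * y₁) : ℂ) * a p
      + ((Real.sinh (lam p * y₁) / lam p : ℝ) : ℂ) * b p :=
    ((hof hcosh).mul ha).add ((hof (hsinh.div hlm)).mul hb)
  have hfb2 : Measurable fun p : PropagatorFreqSpace d₁ d₂ => ((lam p * Real.sinh (lam p * y₁) : ℝ) : ℂ) * a p
      + ((Real.cosh (lam p * y₁) : ℝ) : ℂ) * b p :=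
    ((hof (hlm.mul hsinh)).mul ha).add ((hof hcosh).mul hb)
  have hmA1 : Measurable fun p : PropagatorFreqSpace d₁ d₂ => ENNReal.ofReal (W p * (ω p ^ 2 *
      ‖(Real.cos (ω p * y₁) : ℂ) * a p
        + ((Real.sin (ω p * y₁) / ω p : ℝ) : ℂ) * b p‖ ^ 2)) :=
    ENNReal.measurable_ofReal.comp
      (hWm.mul ((hωm.pow_const 2).mul ((habs hfa1).pow_const 2)))
  have hmB1 : Measurable fun p : PropagatorFreqSpace d₁ d₂ => ENNReal.ofReal (W p *
      ‖-((ω p * Real.sin (ω p * y₁) : ℝ) : ℂ) * a p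
        + ((Real.cos (ω p * y₁) : ℝ) : ℂ) * b p‖ ^ 2) :=
    ENNReal.measurable_ofReal.comp (hWm.mul ((habs hfb1).pow_const 2))
  have hmA2 : Measurable fun p : PropagatorFreqSpace d₁ d₂ => ENNReal.ofReal (W p * (lam p ^ 2 *
      ‖(Real.cosh (lam p * y₁) : ℂ) * a p
        + ((Real.sinh (lam p * y₁) / lam p : ℝ) : ℂ) * b p‖ ^ 2)) :=
    ENNReal.measurable_ofReal.comp
      (hWm.mul ((hlm.pow_const 2).mul ((habs hfa2).pow_const 2)))
  have hmB2 : Measurable fun p : PropagatorFreqSpace d₁ d₂ => ENNReal.ofReal (W p *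
      ‖((lam p * Real.sinh (lam p * y₁) : ℝ) : ℂ) * a p
        + ((Real.cosh (lam p * y₁) : ℝ) : ℂ) * b p‖ ^ 2) :=
    ENNReal.measurable_ofReal.comp (hWm.mul ((habs hfb2).pow_const 2))
  have hJA1 : Measurable fun p : PropagatorFreqSpace d₁ d₂ =>
      ENNReal.ofReal (W p * (ω p ^ 2 * ‖a p‖ ^ 2)) :=
    ENNReal.measurable_ofReal.comp
      (hWm.mul ((hωm.pow_const 2).mul ((habs ha).pow_const 2)))
  have hJA2 : Measurable fun p : PropagatorFreqSpace d₁ d₂ =>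
      ENNReal.ofReal (W p * (lam p ^ 2 * ‖a p‖ ^ 2)) :=
    ENNReal.measurable_ofReal.comp
      (hWm.mul ((hlm.pow_const 2).mul ((habs ha).pow_const 2)))
  -- split the union integrals
  rw [lintegral_union hS₂ hdisj, lintegral_union hS₂ hdisj]
  -- rewrite A, B on each region
  have e1A : (∫⁻ p in S₁, ENNReal.ofReal (W p * (ω p ^ 2 * ‖A y₁ p‖ ^ 2)))
      = ∫⁻ p in S₁, ENNReal.ofReal (W p * (ω p ^ 2 *
          ‖(Real.cos (ω p * y₁) : ℂ) * a p
            + ((Real.sin (ω p * y₁) / ω p : ℝ) : ℂ) * b p‖ ^ 2)) :=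
    setLIntegral_congr_fun hS₁ (fun p hp => by
      rw [hA₁ y₁ p hp])
  have e1B : (∫⁻ p in S₁, ENNReal.ofReal (W p * ‖B y₁ p‖ ^ 2))
      = ∫⁻ p in S₁, ENNReal.ofReal (W p *
          ‖-((ω p * Real.sin (ω p * y₁) : ℝ) : ℂ) * a p
            + ((Real.cos (ω p * y₁) : ℝ) : ℂ) * b p‖ ^ 2) :=
    setLIntegral_congr_fun hS₁ (fun p hp => by
      rw [hB₁ y₁ p hp])
  have e2A : (∫⁻ p in S₂, ENNReal.ofReal (W p * (lam p ^ 2 * ‖A y₁ p‖ ^ 2)))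
      = ∫⁻ p in S₂, ENNReal.ofReal (W p * (lam p ^ 2 *
          ‖(Real.cosh (lam p * y₁) : ℂ) * a p
            + ((Real.sinh (lam p * y₁) / lam p : ℝ) : ℂ) * b p‖ ^ 2)) :=
    setLIntegral_congr_fun hS₂ (fun p hp => by
      rw [hA₂ y₁ p hp])
  have e2B : (∫⁻ p in S₂, ENNReal.ofReal (W p * ‖B y₁ p‖ ^ 2))
      = ∫⁻ p in S₂, ENNReal.ofReal (W p *
          ‖((lam p * Real.sinh (lam p * y₁) : ℝ) : ℂ) * a p
            + ((Real.cosh (lam p * y₁) : ℝ) : ℂ) * b p‖ ^ 2) :=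
    setLIntegral_congr_fun hS₂ (fun p hp => by
      rw [hB₂ y₁ p hp])
  rw [e1A, e1B, e2A, e2B]
  -- region 1: exact energy conservation
  have h1 : (∫⁻ p in S₁, ENNReal.ofReal (W p * (ω p ^ 2 *
        ‖(Real.cos (ω p * y₁) : ℂ) * a p
          + ((Real.sin (ω p * y₁) / ω p : ℝ) : ℂ) * b p‖ ^ 2)))
      + (∫⁻ p in S₁, ENNReal.ofReal (W p *
        ‖-((ω p * Real.sin (ω p * y₁) : ℝ) : ℂ) * a p
          + ((Real.cos (ω p * y₁) : ℝ) : ℂ) * b p‖ ^ 2))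
      ≤ (∫⁻ p in S₁, ENNReal.ofReal (W p * (ω p ^ 2 * ‖a p‖ ^ 2)))
        + ∫⁻ p in S₁, ENNReal.ofReal (W p * ‖b p‖ ^ 2) := by
    rw [← lintegral_add_left hmA1, ← lintegral_add_left hJA1]
    refine le_of_eq (setLIntegral_congr_fun hS₁ (fun p hp => ?_))
    have hwne : ω p ≠ 0 := (hωpos p hp).ne'
    rw [← ENNReal.ofReal_add
        (mul_nonneg (hW0 p) (mul_nonneg (sq_nonneg _) (sq_nonneg _)))
        (mul_nonneg (hW0 p) (sq_nonneg _)),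
      ← ENNReal.ofReal_add
        (mul_nonneg (hW0 p) (mul_nonneg (sq_nonneg _) (sq_nonneg _)))
        (mul_nonneg (hW0 p) (sq_nonneg _)),
      ← mul_add, ← mul_add, propagator_key1 (ω p) y₁ hwne (a p) (b p)]
  -- region 2: energy decay using the constraint
  have h2 : (∫⁻ p in S₂, ENNReal.ofReal (W p * (lam p ^ 2 *
        ‖(Real.cosh (lam p * y₁) : ℂ) * a p
          + ((Real.sinh (lam p * y₁) / lam p : ℝ) : ℂ) * b p‖ ^ 2)))
      + (∫⁻ p in S₂, ENNReal.ofReal (W p *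
        ‖((lam p * Real.sinh (lam p * y₁) : ℝ) : ℂ) * a p
          + ((Real.cosh (lam p * y₁) : ℝ) : ℂ) * b p‖ ^ 2))
      ≤ (∫⁻ p in S₂, ENNReal.ofReal (W p * (lam p ^ 2 * ‖a p‖ ^ 2)))
        + ∫⁻ p in S₂, ENNReal.ofReal (W p * ‖b p‖ ^ 2) := by
    rw [← lintegral_add_left hmA2, ← lintegral_add_left hJA2]
    refine lintegral_mono_ae ?_
    filter_upwards [hconstraint, ae_restrict_mem hS₂] with p hc hp
    have hbp : b p = -(lam p : ℂ) * a p := by linear_combination hc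
    have hl : 0 < lam p := hlpos p hp
    rw [hbp]
    rw [← ENNReal.ofReal_add
        (mul_nonneg (hW0 p) (mul_nonneg (sq_nonneg _) (sq_nonneg _)))
        (mul_nonneg (hW0 p) (sq_nonneg _)),
      ← ENNReal.ofReal_add
        (mul_nonneg (hW0 p) (mul_nonneg (sq_nonneg _) (sq_nonneg _)))
        (mul_nonneg (hW0 p) (sq_nonneg _)),
      ← mul_add, ← mul_add]
    exact ENNReal.ofReal_le_ofReal
      (mul_le_mul_of_nonneg_left (propagator_key2 (lam p) y₁ hl hy₁ (a p)) (hW0 p))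
  -- combine the two regions
  have rearr : ∀ x y z t : ENNReal, x + y + (z + t) = x + z + (y + t) := fun x y z t => by ring
  exact le_of_le_of_eq (le_of_eq_of_le (rearr _ _ _ _) (add_le_add h1 h2))
    (rearr _ _ _ _).symm
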